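/- If a Gaussian cubature formula of degree 2m−1 for μ exists, with moment sequence z of the node measure ν = Σ_k γ_k δ_{x(k)}, then the vector u = L_z(𝒫_{2m}) ∈ ℝ^{r_{2m}} solves the linear system A⁰ + A^{(2m)} u = 0. -/

import Mathlib

open MeasureTheory MvPolynomial

noncomputable section

/-- Total degree of a multi-index. -/
def mdeg {n : ℕ} (α : Fin n →₀ ℕ) : ℕ := α.sum fun _ k => k

/-- The strict graded lexicographic order on multi-indices. -/
def glt {n : ℕ} (α β : Fin n →₀ ℕ) : Prop :=
  mdeg α < mdeg β ∨ (mdeg α = mdeg β ∧ toLex β < toLex α)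

lemma mdeg_apply_le {n : ℕ} (α : Fin n →₀ ℕ) (i : Fin n) : α i ≤ mdeg α := by
  by_cases h : i ∈ α.support
  · exact Finset.single_le_sum (fun _ _ => Nat.zero_le _) h
  · simp [Finsupp.notMem_support_iff.mp h]

lemma mdeg_eq_zero {n : ℕ} {α : Fin n →₀ ℕ} (h : mdeg α = 0) : α = 0 := by
  ext i; exact Nat.le_zero.mp (h ▸ mdeg_apply_le α i)

lemma glt_mdeg_le {n : ℕ} {α β : Fin n →₀ ℕ} (h : glt α β) : mdeg α ≤ mdeg β := by
  rcases h with h | ⟨h, _⟩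
  · exact le_of_lt h
  · exact le_of_eq h

lemma not_glt_zero {n : ℕ} (β : Fin n →₀ ℕ) : ¬ glt β 0 := by
  rintro (h | ⟨h, h'⟩)
  · simp [mdeg, Finsupp.sum] at h
  · have : β = 0 := mdeg_eq_zero (by simpa [mdeg, Finsupp.sum] using h)
    subst this; exact lt_irrefl _ h'

instance glt_strict (n : ℕ) : IsStrictOrder (Fin n →₀ ℕ) glt where
  irrefl a := by simp [glt]
  trans a b c hab hbc := by
    rcases hab with h1 | ⟨h1, h1'⟩ <;> rcases hbc with h2 | ⟨h2, h2'⟩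
    · exact Or.inl (h1.trans h2)
    · exact Or.inl (h2 ▸ h1)
    · exact Or.inl (h1 ▸ h2)
    · exact Or.inr ⟨h1.trans h2, h2'.trans h1'⟩

/-- The finset of multi-indices of total degree at most `d`. -/
def degLE (n d : ℕ) : Finset (Fin n →₀ ℕ) :=
  (Finset.Iic (Finsupp.equivFunOnFinite.symm fun _ => d)).filter (fun α => mdeg α ≤ d)

lemma mem_degLE {n d : ℕ} {α : Fin n →₀ ℕ} : α ∈ degLE n d ↔ mdeg α ≤ d := by
  constructor
  · intro h; exact (Finset.mem_filter.mp h).2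
  · intro h
    refine Finset.mem_filter.mpr ⟨Finset.mem_Iic.mpr ?_, h⟩
    intro i
    exact le_trans (mdeg_apply_le α i) h

/-- The finset of multi-indices of total degree exactly `k`. -/
def degEQ (n k : ℕ) : Finset (Fin n →₀ ℕ) := (degLE n k).filter (fun α => mdeg α = k)

lemma mem_degEQ {n k : ℕ} {α : Fin n →₀ ℕ} : α ∈ degEQ n k ↔ mdeg α = k := by
  simp only [degEQ, Finset.mem_filter, mem_degLE]
  exact ⟨fun h => h.2, fun h => ⟨le_of_eq h, h⟩⟩

lemma card_tm {n : ℕ} (f : Fin n →₀ ℕ) : Multiset.card (Finsupp.toMultiset f) = mdeg f :=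
  Finsupp.card_toMultiset f

/-- Monomials of degree `k` correspond to multisets of size `k`. -/
def degEQequivSym (n k : ℕ) : {α : Fin n →₀ ℕ // mdeg α = k} ≃ Sym (Fin n) k where
  toFun a := ⟨Finsupp.toMultiset a.1, by rw [card_tm]; exact a.2⟩
  invFun s := ⟨Multiset.toFinsupp s.1, by
    rw [← card_tm, Multiset.toFinsupp_toMultiset, s.2]⟩
  left_inv a := by simp
  right_inv s := by apply Subtype.ext; simp

lemma card_degEQ (n k : ℕ) : (degEQ n k).card = (n + k - 1).choose k := by
  letI : Fintype {α : Fin n →₀ ℕ // mdeg α = k} :=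
    Fintype.ofFinset (degEQ n k) (fun α => mem_degEQ)
  have h1 : (degEQ n k).card = Fintype.card {α : Fin n →₀ ℕ // mdeg α = k} :=
    (Fintype.card_ofFinset _ _).symm
  rw [h1, Fintype.card_congr (degEQequivSym n k), Sym.card_sym_eq_choose, Fintype.card_fin]

/-- Stars and bars: the dimension count for polynomials of degree at most `m - 1`. -/
lemma card_degLE (n m : ℕ) (hn : 1 ≤ n) (hm : 1 ≤ m) :
    (degLE n (m - 1)).card = (n + m - 1).choose n := by
  have hsplit : degLE n (m - 1) = (Finset.range m).biUnion (fun k => degEQ n k) := by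
    ext α
    simp only [mem_degLE, Finset.mem_biUnion, Finset.mem_range, mem_degEQ]
    constructor
    · intro h; exact ⟨mdeg α, by omega, rfl⟩
    · rintro ⟨k, hk, rfl⟩; omega
  rw [hsplit, Finset.card_biUnion]
  · have : ∀ k ∈ Finset.range m, (degEQ n k).card = (n - 1 + k).choose (n - 1) := by
      intro k _
      rw [card_degEQ]
      rw [show n + k - 1 = n - 1 + k by omega]
      rw [← Nat.choose_symm (Nat.le_add_left k (n-1))]
      congr 1; omega
    rw [Finset.sum_congr rfl this]
    have h2 := Nat.sum_Icc_choose (n - 1 + (m-1)) (n-1)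
    rw [show Finset.Icc (n-1) (n - 1 + (m-1)) = Finset.Ico (n-1) (n + m - 1) by
          rw [← Finset.Ico_add_one_right_eq_Icc]; congr 1; omega,
        Finset.sum_Ico_eq_sum_range, show n + m - 1 - (n-1) = m by omega] at h2
    rw [h2, show n - 1 + (m-1) + 1 = n + m - 1 by omega, show n - 1 + 1 = n by omega]
  · intro a _ b _ hab
    simp only [Finset.disjoint_left, mem_degEQ]
    intro α h1 h2; exact hab (h1 ▸ h2.symm ▸ rfl)

/-- If a Gaussian cubature of degree `2m − 1` exists with node measure
`ν = Σ_k γ_k δ_{x(k)}`, then `u = L_z(𝒫_{2m})`, i.e.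
`u_κ = Σ_k γ_k P_κ(x(k))` for `|κ| = 2m`, solves the linear system
`A⁰ + A^{(2m)} u = 0`. -/
theorem stmt_13 (n m : ℕ) (hn : 1 ≤ n) (hm : 1 ≤ m)
    (μ : Measure (Fin n → ℝ)) [IsFiniteMeasure μ]
    (hint : ∀ f : MvPolynomial (Fin n) ℝ, Integrable (fun x => eval x f) μ)
    (hpd : ∀ f : MvPolynomial (Fin n) ℝ, f ≠ 0 → 0 < ∫ x, (eval x f) ^ 2 ∂μ)
    (P : (Fin n →₀ ℕ) → MvPolynomial (Fin n) ℝ)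
    (hspan : ∀ α : Fin n →₀ ℕ, ∀ β ∈ (P α).support, β = α ∨ glt β α)
    (horth : ∀ α β : Fin n →₀ ℕ,
      ∫ x, eval x (P α) * eval x (P β) ∂μ = if α = β then 1 else 0)
    (hlow : ∀ α β : Fin n →₀ ℕ, glt β α →
      ∫ x, eval x (P α) * ∏ i, x i ^ β i ∂μ = 0)
    (hlead : ∀ α : Fin n →₀ ℕ, 0 < ∫ x, eval x (P α) * ∏ i, x i ^ α i ∂μ)
    (K : Finset (Fin n →₀ ℕ)) (hK : ∀ κ : Fin n →₀ ℕ, κ ∈ K ↔ mdeg κ = 2 * m)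
    (x : Fin (Nat.choose (n + m - 1) n) → (Fin n → ℝ))
    (w : Fin (Nat.choose (n + m - 1) n) → ℝ)
    (hx : Function.Injective x) (hw : ∀ k, 0 < w k)
    (hcub : ∀ f : MvPolynomial (Fin n) ℝ, f.totalDegree ≤ 2 * m - 1 →
      ∑ k, w k * eval (x k) f = ∫ t, eval t f ∂μ) :
    ∀ γ β : Fin n →₀ ℕ, mdeg γ = m → mdeg β = m →
      (if γ = β then (1 : ℝ) else 0)
        + ∑ κ ∈ K, (∫ t, eval t (P γ) * eval t (P β) * eval t (P κ) ∂μ)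
            * (∑ k, w k * eval (x k) (P κ)) = 0 := by
  classical
  -- integrability of products of polynomials
  have hint2 : ∀ f g : MvPolynomial (Fin n) ℝ,
      Integrable (fun t => eval t f * eval t g) μ := by
    intro f g
    simpa using hint (f * g)
  have hintm : ∀ (f : MvPolynomial (Fin n) ℝ) (b : Fin n →₀ ℕ),
      Integrable (fun t => eval t f * ∏ i, t i ^ b i) μ := by
    intro f b
    have := hint2 f (monomial b 1)
    simpa [eval_monomial, Finsupp.prod_pow] using this
  -- expansion of the second factor into monomials
  have hexp : ∀ f g : MvPolynomial (Fin n) ℝ,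
      ∫ t, eval t f * eval t g ∂μ
        = ∑ b ∈ g.support, coeff b g * ∫ t, eval t f * ∏ i, t i ^ b i ∂μ := by
    intro f g
    have h1 : ∀ t : Fin n → ℝ, eval t f * eval t g
        = ∑ b ∈ g.support, coeff b g * (eval t f * ∏ i, t i ^ b i) := by
      intro t
      rw [eval_eq' t g, Finset.mul_sum]
      exact Finset.sum_congr rfl fun b _ => by ring
    calc ∫ t, eval t f * eval t g ∂μ
        = ∫ t, ∑ b ∈ g.support, coeff b g * (eval t f * ∏ i, t i ^ b i) ∂μ := by
          congr 1; funext t; exact h1 t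
      _ = ∑ b ∈ g.support, ∫ t, coeff b g * (eval t f * ∏ i, t i ^ b i) ∂μ :=
          integral_finset_sum _ (fun b _ => (hintm f b).const_mul _)
      _ = ∑ b ∈ g.support, coeff b g * ∫ t, eval t f * ∏ i, t i ^ b i ∂μ :=
          Finset.sum_congr rfl fun b _ => integral_const_mul _ _
  -- the leading coefficient of each P α is nonzero
  have hone : ∀ a : Fin n →₀ ℕ,
      coeff a (P a) * ∫ t, eval t (P a) * ∏ i, t i ^ a i ∂μ = 1 := by
    intro a
    have h := horth a a
    rw [if_pos rfl, hexp (P a) (P a)] at h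
    rw [Finset.sum_eq_single a ?h1 ?h2] at h
    · exact h
    case h1 =>
      intro b hb hba
      rcases hspan a b hb with h' | h'
      · exact absurd h' hba
      · rw [hlow a b h', mul_zero]
    case h2 =>
      intro ha
      rw [MvPolynomial.notMem_support_iff.mp ha, zero_mul]
  have hcne : ∀ a : Fin n →₀ ℕ, coeff a (P a) ≠ 0 :=
    fun a => left_ne_zero_of_mul_eq_one (hone a)
  have hPinj : Function.Injective P := by
    intro a b hab
    by_contra hne
    have h1 := horth a b
    rw [if_neg hne, hab] at h1
    have h2 := horth b b
    rw [if_pos rfl] at h2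
    rw [h1] at h2
    exact zero_ne_one h2
  have hPdeg : ∀ a : Fin n →₀ ℕ, (P a).totalDegree ≤ mdeg a := by
    intro a
    apply Finset.sup_le
    intro b hb
    rcases hspan a b hb with h | h
    · exact le_of_eq (congrArg mdeg h)
    · exact glt_mdeg_le h
  -- the nodes are common zeros of the orthogonal polynomials of degree m
  have hzero : ∀ a : Fin n →₀ ℕ, mdeg a = m → ∀ k, eval (x k) (P a) = 0 := by
    intro a ha j
    set S : Finset (Fin n →₀ ℕ) := degLE n (m - 1) with hSdef
    let poly : ({b // b ∈ S} → ℝ) → MvPolynomial (Fin n) ℝ :=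
      fun c => ∑ b : {b // b ∈ S}, monomial (b : Fin n →₀ ℕ) (c b)
    have hpolydeg : ∀ c, (poly c).totalDegree ≤ m - 1 := by
      intro c
      refine (totalDegree_finset_sum _ _).trans (Finset.sup_le ?_)
      intro b _
      exact le_trans (totalDegree_monomial_le _ _) (mem_degLE.mp b.2)
    have hpolycoeff : ∀ c (b : {b // b ∈ S}), coeff (b : Fin n →₀ ℕ) (poly c) = c b := by
      intro c b
      rw [show poly c = ∑ b : {b // b ∈ S}, monomial (b : Fin n →₀ ℕ) (c b) from rfl]
      rw [MvPolynomial.coeff_sum]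
      rw [Fintype.sum_eq_single b]
      · rw [coeff_monomial, if_pos rfl]
      · intro b' hb'
        rw [coeff_monomial, if_neg (fun hh => hb' (Subtype.ext hh))]
    have heval_poly : ∀ c (t : Fin n → ℝ),
        eval t (poly c) = ∑ b : {b // b ∈ S}, c b * ∏ i, t i ^ (b : Fin n →₀ ℕ) i := by
      intro c t
      rw [show poly c = ∑ b : {b // b ∈ S}, monomial (b : Fin n →₀ ℕ) (c b) from rfl]
      rw [map_sum]
      exact Fintype.sum_congr _ _ fun b => by rw [eval_monomial, Finsupp.prod_pow]
    let Φ : ({b // b ∈ S} → ℝ) →ₗ[ℝ] (Fin ((n + m - 1).choose n) → ℝ) :=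
      { toFun := fun c k => ∑ b : {b // b ∈ S}, c b * ∏ i, x k i ^ (b : Fin n →₀ ℕ) i
        map_add' := by
          intro c d; funext k
          simp [add_mul, Finset.sum_add_distrib]
        map_smul' := by
          intro r c; funext k
          simp [smul_eq_mul, Finset.mul_sum, mul_assoc] }
    have hPhieval : ∀ c k, Φ c k = eval (x k) (poly c) := by
      intro c k
      rw [heval_poly]
      rfl
    have hker : LinearMap.ker Φ = ⊥ := by
      rw [LinearMap.ker_eq_bot']
      intro c hc
      have h4 : ∀ k, eval (x k) (poly c) = 0 := by
        intro k
        rw [← hPhieval]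
        exact congrFun hc k
      have hf0 : poly c = 0 := by
        by_contra hne
        have hdeg2 : (poly c ^ 2).totalDegree ≤ 2 * m - 1 := by
          refine le_trans (totalDegree_pow _ _) ?_
          have := hpolydeg c
          omega
        have h3 := hcub (poly c ^ 2) hdeg2
        have hL0 : ∑ k, w k * eval (x k) (poly c ^ 2) = 0 := by
          refine Finset.sum_eq_zero fun k _ => ?_
          rw [map_pow, h4 k]
          ring
        have hR0 : ∫ t, eval t (poly c ^ 2) ∂μ = ∫ t, (eval t (poly c)) ^ 2 ∂μ := by
          congr 1; funext t; rw [map_pow]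
        rw [hL0, hR0] at h3
        exact absurd h3.symm (ne_of_gt (hpd _ hne))
      funext b
      have := hpolycoeff c b
      rw [hf0] at this
      simpa using this.symm
    have hdim : Module.finrank ℝ ({b // b ∈ S} → ℝ) = Module.finrank ℝ (Fin ((n + m - 1).choose n) → ℝ) := by
      rw [Module.finrank_pi, Module.finrank_pi, Fintype.card_coe, Fintype.card_fin,
        hSdef, card_degLE n m hn hm]
    have hsurj := (LinearMap.injective_iff_surjective_of_finrank_eq_finrank hdim).mp
      (LinearMap.ker_eq_bot.mp hker)
    obtain ⟨c, hc⟩ := hsurj (Pi.single j 1 : Fin ((n + m - 1).choose n) → ℝ)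
    have hev : ∀ k, eval (x k) (poly c) = (Pi.single j 1 : Fin ((n + m - 1).choose n) → ℝ) k := by
      intro k
      rw [← hPhieval, hc]
    have hdegl : (P a * poly c).totalDegree ≤ 2 * m - 1 := by
      refine le_trans (totalDegree_mul _ _) ?_
      have h1 := hPdeg a
      have h2 := hpolydeg c
      omega
    have h5 := hcub (P a * poly c) hdegl
    have hL : ∑ k, w k * eval (x k) (P a * poly c) = w j * eval (x j) (P a) := by
      rw [Finset.sum_eq_single j]
      · rw [map_mul, hev j, Pi.single_eq_same, mul_one]
      · intro k _ hk
        rw [map_mul, hev k, Pi.single_eq_of_ne hk, mul_zero, mul_zero]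
      · intro h; exact absurd (Finset.mem_univ j) h
    have hR : ∫ t, eval t (P a * poly c) ∂μ = 0 := by
      have heq : ∫ t, eval t (P a * poly c) ∂μ = ∫ t, eval t (P a) * eval t (poly c) ∂μ := by
        congr 1; funext t; rw [map_mul]
      rw [heq, hexp]
      refine Finset.sum_eq_zero fun b hb => ?_
      have hbd : mdeg b ≤ m - 1 := le_trans (le_totalDegree hb) (hpolydeg c)
      have hba : glt b a := Or.inl (by omega)
      rw [hlow a b hba, mul_zero]
    rw [hL, hR] at h5
    rcases mul_eq_zero.mp h5 with h | h
    · exact absurd h (ne_of_gt (hw j))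
    · exact h
  -- P 0 is a nonzero constant
  have hP0 : P 0 = C (coeff 0 (P 0)) := by
    have hsub : (P 0).support ⊆ {0} := by
      intro b hb
      rcases hspan 0 b hb with h | h
      · simp [h]
      · exact absurd h (not_glt_zero b)
    rcases Finset.subset_singleton_iff.mp hsub with h | h
    · rw [MvPolynomial.support_eq_empty.mp h]; simp
    · conv_lhs => rw [as_sum (P 0)]
      rw [h, Finset.sum_singleton]
      rw [C_apply]
  intro γ β hγ hβ
  set T : Finset (Fin n →₀ ℕ) := degLE n (2 * m) with hTdef
  have hmdeg0 : mdeg (0 : Fin n →₀ ℕ) = 0 := Finsupp.sum_zero_index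
  -- monomials of degree at most 2m lie in the span of the P's
  have hmono : ∀ b ∈ T, (monomial b (1:ℝ)) ∈ Submodule.span ℝ (P '' ↑T) := by
    have hwf : (↑T : Set (Fin n →₀ ℕ)).WellFoundedOn glt := T.finite_toSet.wellFoundedOn
    have key : ∀ b ∈ (↑T : Set (Fin n →₀ ℕ)),
        (monomial (b : Fin n →₀ ℕ) (1:ℝ)) ∈ Submodule.span ℝ (P '' ↑T) := by
      refine fun b hbmem => Set.WellFoundedOn.induction hwf (P := fun y => (monomial y (1:ℝ)) ∈ Submodule.span ℝ (P '' ↑T)) hbmem ?_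
      intro y hymem IH
      have hyT : (y : Fin n →₀ ℕ) ∈ T := Finset.mem_coe.mp hymem
      have hysupp : (y : Fin n →₀ ℕ) ∈ (P (y : Fin n →₀ ℕ)).support :=
        MvPolynomial.mem_support_iff.mpr (hcne (y : Fin n →₀ ℕ))
      have hrest : ∑ b ∈ ((P (y : Fin n →₀ ℕ)).support.erase (y : Fin n →₀ ℕ)),
          monomial b (coeff b (P (y : Fin n →₀ ℕ))) ∈ Submodule.span ℝ (P '' ↑T) := by
        refine Submodule.sum_mem _ fun b hb => ?_
        have hbne : b ≠ (y : Fin n →₀ ℕ) := Finset.ne_of_mem_erase hb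
        have hbs : b ∈ (P (y : Fin n →₀ ℕ)).support := Finset.mem_of_mem_erase hb
        have hbg : glt b (y : Fin n →₀ ℕ) := (hspan _ b hbs).resolve_left hbne
        have hbT : b ∈ T := mem_degLE.mpr (le_trans (glt_mdeg_le hbg) (mem_degLE.mp hyT))
        have hIH := IH b (Finset.mem_coe.mpr hbT) hbg
        have h2 : monomial b (coeff b (P (y : Fin n →₀ ℕ)))
            = (coeff b (P (y : Fin n →₀ ℕ))) • monomial b (1:ℝ) := by
          rw [smul_monomial, smul_eq_mul, mul_one]
        rw [h2]
        exact Submodule.smul_mem _ _ hIH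
      have hPy : monomial (y : Fin n →₀ ℕ) (coeff (y : Fin n →₀ ℕ) (P (y : Fin n →₀ ℕ)))
          = P (y : Fin n →₀ ℕ) - ∑ b ∈ ((P (y : Fin n →₀ ℕ)).support.erase (y : Fin n →₀ ℕ)),
              monomial b (coeff b (P (y : Fin n →₀ ℕ))) := by
        rw [eq_sub_iff_add_eq]
        conv_rhs => rw [as_sum (P (y : Fin n →₀ ℕ))]
        exact Finset.add_sum_erase _ _ hysupp
      have hPyspan : P (y : Fin n →₀ ℕ) ∈ Submodule.span ℝ (P '' ↑T) :=
        Submodule.subset_span ⟨(y : Fin n →₀ ℕ), Finset.mem_coe.mpr hyT, rfl⟩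
      have h3 : monomial (y : Fin n →₀ ℕ) (coeff (y : Fin n →₀ ℕ) (P (y : Fin n →₀ ℕ)))
          ∈ Submodule.span ℝ (P '' ↑T) := hPy ▸ Submodule.sub_mem _ hPyspan hrest
      have h4 : monomial (y : Fin n →₀ ℕ) (1:ℝ)
          = (coeff (y : Fin n →₀ ℕ) (P (y : Fin n →₀ ℕ)))⁻¹
              • monomial (y : Fin n →₀ ℕ) (coeff (y : Fin n →₀ ℕ) (P (y : Fin n →₀ ℕ))) := by
        rw [smul_monomial, smul_eq_mul, inv_mul_cancel₀ (hcne _)]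
      rw [h4]
      exact Submodule.smul_mem _ _ h3
    intro b hb
    exact key b (Finset.mem_coe.mpr hb)
  -- the product P γ * P β lies in the span
  have hg : P γ * P β ∈ Submodule.span ℝ (P '' ↑T) := by
    have hdeg : (P γ * P β).totalDegree ≤ 2 * m := by
      refine le_trans (totalDegree_mul _ _) ?_
      have h1 := hPdeg γ
      have h2 := hPdeg β
      omega
    rw [as_sum (P γ * P β)]
    refine Submodule.sum_mem _ fun b hb => ?_
    have hbT : b ∈ T := mem_degLE.mpr (le_trans (le_totalDegree hb) hdeg)
    rw [show monomial b (coeff b (P γ * P β)) = (coeff b (P γ * P β)) • monomial b (1:ℝ) by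
      rw [smul_monomial, smul_eq_mul, mul_one]]
    exact Submodule.smul_mem _ _ (hmono b hbT)
  -- a representation of the product in terms of the P's
  have hrep : ∃ d : (Fin n →₀ ℕ) → ℝ, P γ * P β = ∑ α ∈ T, d α • P α := by
    rw [show P '' ↑T = ↑(T.image P) by rw [Finset.coe_image]] at hg
    obtain ⟨f, -, hf⟩ := Submodule.mem_span_finset.mp hg
    refine ⟨fun α => f (P α), ?_⟩
    rw [← hf, Finset.sum_image (fun a _ b _ h => hPinj h)]
  obtain ⟨d, hd⟩ := hrep
  have hT0 : (0 : Fin n →₀ ℕ) ∈ T := mem_degLE.mpr (by omega)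
  have hKT : K ⊆ T := fun κ hκ => mem_degLE.mpr (le_of_eq ((hK κ).mp hκ))
  have h0K : (0 : Fin n →₀ ℕ) ∉ K := fun h => by
    have := (hK 0).mp h
    omega
  -- the coefficients are the triple-product integrals
  have hdcoef : ∀ δ ∈ T, ∫ t, eval t (P γ) * eval t (P β) * eval t (P δ) ∂μ = d δ := by
    intro δ hδ
    have h1 : ∀ t : Fin n → ℝ, eval t (P γ) * eval t (P β) * eval t (P δ)
        = ∑ α ∈ T, d α * (eval t (P α) * eval t (P δ)) := by
      intro t
      rw [show eval t (P γ) * eval t (P β) = eval t (P γ * P β) from (map_mul _ _ _).symm,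
        hd, map_sum, Finset.sum_mul]
      refine Finset.sum_congr rfl fun α _ => ?_
      rw [smul_eq_C_mul, map_mul, eval_C]
      ring
    calc ∫ t, eval t (P γ) * eval t (P β) * eval t (P δ) ∂μ
        = ∫ t, ∑ α ∈ T, d α * (eval t (P α) * eval t (P δ)) ∂μ := by
          congr 1; funext t; exact h1 t
      _ = ∑ α ∈ T, ∫ t, d α * (eval t (P α) * eval t (P δ)) ∂μ :=
          integral_finset_sum _ (fun α _ => (hint2 _ _).const_mul _)
      _ = ∑ α ∈ T, d α * ∫ t, eval t (P α) * eval t (P δ) ∂μ :=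
          Finset.sum_congr rfl fun α _ => integral_const_mul _ _
      _ = ∑ α ∈ T, d α * (if α = δ then 1 else 0) :=
          Finset.sum_congr rfl fun α _ => by rw [horth]
      _ = d δ := by simp [mul_ite, Finset.sum_ite_eq', hδ]
  -- L vanishes on P α for α of intermediate degree
  have hLzero : ∀ α ∈ T, α ∉ K → α ≠ 0 → (∑ k, w k * eval (x k) (P α)) = 0 := by
    intro α hαT hαK hα0
    have hdeg : (P α).totalDegree ≤ 2 * m - 1 := by
      have h1 := hPdeg α
      have h2 : mdeg α ≤ 2 * m := mem_degLE.mp hαT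
      have h3 : mdeg α ≠ 2 * m := fun h => hαK ((hK α).mpr h)
      omega
    rw [hcub (P α) hdeg]
    have h4 := horth α 0
    rw [if_neg hα0, hP0] at h4
    simp only [eval_C] at h4
    rw [integral_mul_const] at h4
    rcases mul_eq_zero.mp h4 with h | h
    · exact h
    · exact absurd h (hcne 0)
  -- the value of L on P 0
  have hL0val : (∑ k, w k * eval (x k) (P 0)) = coeff 0 (P 0) * (μ Set.univ).toReal := by
    have hdeg : (P 0).totalDegree ≤ 2 * m - 1 := by
      have h1 := hPdeg 0
      omega
    rw [hcub _ hdeg]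
    conv_lhs => rw [hP0]
    simp [integral_const, smul_eq_mul, mul_comm, Measure.real]
  have hnorm : (μ Set.univ).toReal * (coeff 0 (P 0) * coeff 0 (P 0)) = 1 := by
    have h := horth 0 0
    rw [if_pos rfl, hP0] at h
    simpa [integral_const, smul_eq_mul, Measure.real] using h
  -- the discrete functional kills the product
  have hsum0 : ∑ α ∈ T, d α * (∑ k, w k * eval (x k) (P α)) = 0 := by
    have h2 : ∑ k, w k * eval (x k) (P γ * P β) = 0 := by
      refine Finset.sum_eq_zero fun k _ => ?_
      rw [map_mul, hzero γ hγ k, zero_mul, mul_zero]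
    calc ∑ α ∈ T, d α * (∑ k, w k * eval (x k) (P α))
        = ∑ α ∈ T, ∑ k, d α * (w k * eval (x k) (P α)) :=
          Finset.sum_congr rfl fun α _ => Finset.mul_sum _ _ _
      _ = ∑ k, ∑ α ∈ T, d α * (w k * eval (x k) (P α)) := Finset.sum_comm
      _ = ∑ k, w k * eval (x k) (P γ * P β) := by
          refine Finset.sum_congr rfl fun k _ => ?_
          rw [hd, map_sum, Finset.mul_sum]
          refine Finset.sum_congr rfl fun α _ => ?_
          rw [smul_eq_C_mul, map_mul, eval_C]
          ring
      _ = 0 := h2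
  -- split the sum over T
  have hsplit : ∑ α ∈ T, d α * (∑ k, w k * eval (x k) (P α))
      = (∑ κ ∈ K, d κ * (∑ k, w k * eval (x k) (P κ)))
        + d 0 * (∑ k, w k * eval (x k) (P 0)) := by
    rw [← Finset.sum_sdiff hKT]
    have h5 : ∑ α ∈ T \ K, d α * (∑ k, w k * eval (x k) (P α))
        = d 0 * (∑ k, w k * eval (x k) (P 0)) := by
      rw [Finset.sum_eq_single 0]
      · intro α hα hα0
        have hαT := (Finset.mem_sdiff.mp hα).1
        have hαK := (Finset.mem_sdiff.mp hα).2
        rw [hLzero α hαT hαK hα0, mul_zero]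
      · intro h0
        exact absurd (Finset.mem_sdiff.mpr ⟨hT0, h0K⟩) h0
    rw [h5, add_comm]
  -- the degree-zero term gives the Kronecker delta
  have hδ0 : d 0 * (∑ k, w k * eval (x k) (P 0)) = (if γ = β then (1:ℝ) else 0) := by
    rw [← hdcoef 0 hT0, hL0val]
    conv_lhs => rw [hP0]
    simp only [eval_C]
    rw [integral_mul_const, horth γ β]
    rcases eq_or_ne γ β with h | h
    · simp only [if_pos h, coeff_zero_C]
      linear_combination hnorm
    · simp only [if_neg h, coeff_zero_C, zero_mul]
  -- put everything together
  have hrewrite : ∑ κ ∈ K, (∫ t, eval t (P γ) * eval t (P β) * eval t (P κ) ∂μ)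
      * (∑ k, w k * eval (x k) (P κ))
      = ∑ κ ∈ K, d κ * (∑ k, w k * eval (x k) (P κ)) :=
    Finset.sum_congr rfl fun κ hκ => by rw [hdcoef κ (hKT hκ)]
  rw [hrewrite]
  rw [hsplit, hδ0] at hsum0
  linarith
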